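/- Let k ∈ {1,…,n}, Q_0 = [0,1]^n, m ∈ ℕ, ε > 0 and K > 0. Suppose F, G ∈ C²(Q_0) satisfy | ∫_Q ( C_k(∇²F(x)) − C_k(∇²G(x)) ) dx | ≤ ε |Q| for every Q ∈ 𝒬(m), and ∫_{Q_0} ( C_k(∇²F(x)) + C_k(∇²G(x)) ) dx ≤ 2K. Then for every φ ∈ C¹(Q_0), | ∫_{Q_0} ( C_k(∇²F(x)) − C_k(∇²G(x)) ) φ(x) dx | ≤ ε ‖φ‖_∞ + 2K (√n / m) ‖∇φ‖_∞. -/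

import Mathlib

open MeasureTheory Filter Topology Metric Set
open scoped RealInnerProductSpace ENNReal

noncomputable section

/-- Euclidean `n`-space. -/
abbrev Euc (n : ℕ) := EuclideanSpace ℝ (Fin n)

/-- Operator (spectral) norm of an `n × n` real matrix, i.e. the norm of the induced
linear map on Euclidean space. -/
def matOpNorm {n : ℕ} (A : Matrix (Fin n) (Fin n) ℝ) : ℝ :=
  ‖LinearMap.toContinuousLinearMap (Matrix.toEuclideanLin A)‖

/-- The singular values of a real square matrix: the eigenvalues of `√(Aᵀ A)`
(equivalently, the square roots of the eigenvalues of `Aᵀ A = Aᴴ A`), in some order. -/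
def singularValues {n : ℕ} (A : Matrix (Fin n) (Fin n) ℝ) : Fin n → ℝ :=
  fun i => Real.sqrt ((Matrix.isHermitian_iff_isSymm.mpr (Matrix.isSymm_transpose_mul_self A)).eigenvalues i)

/-- `k`-th elementary symmetric function of `n` numbers. -/
def Sk {n : ℕ} (k : ℕ) (μ : Fin n → ℝ) : ℝ :=
  ∑ s ∈ Finset.powersetCard k Finset.univ, ∏ i ∈ s, μ i

/-- `C_k(A)`: the `k`-th elementary symmetric function of the singular values of `A`. -/
def Ck {n : ℕ} (k : ℕ) (A : Matrix (Fin n) (Fin n) ℝ) : ℝ :=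
  Sk k (singularValues A)

/-- The Hessian matrix of a function `g : ℝⁿ → ℝ` at `x`. -/
def hess {n : ℕ} (g : Euc n → ℝ) (x : Euc n) : Matrix (Fin n) (Fin n) ℝ :=
  Matrix.of fun i j =>
    fderiv ℝ (fun y => fderiv ℝ g y (EuclideanSpace.single j 1)) x (EuclideanSpace.single i 1)

/-- The Jacobian matrix of a map `h : ℝⁿ → ℝⁿ` at `x`. -/
def jac {n : ℕ} (h : Euc n → Euc n) (x : Euc n) : Matrix (Fin n) (Fin n) ℝ :=
  Matrix.of fun i j => fderiv ℝ h x (EuclideanSpace.single j 1) i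

/-- The closed cube with "lower--left" corner `a` and side length `r`. -/
def cube {n : ℕ} (a : Euc n) (r : ℝ) : Set (Euc n) := {x | ∀ i, x i ∈ Icc (a i) (a i + r)}

/-- The open unit cube `(0,1)ⁿ`. -/
def openUnitCube (n : ℕ) : Set (Euc n) := {x | ∀ i, x i ∈ Ioo (0:ℝ) 1}

/-- The closed unit cube `Q₀ = [0,1]ⁿ`. -/
def closedUnitCube (n : ℕ) : Set (Euc n) := {x | ∀ i, x i ∈ Icc (0:ℝ) 1}

/-- The closed subcube of side `1/m` of `[0,1]ⁿ` indexed by `z ∈ {0,…,m-1}ⁿ`;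
these cubes form the partition `𝒬(m)`. -/
def gridCube {n : ℕ} (m : ℕ) (z : Fin n → ℕ) : Set (Euc n) :=
  {x | ∀ i, x i ∈ Icc ((z i : ℝ) / m) (((z i : ℝ) + 1) / m)}

/-- `p` as an extended nonnegative real exponent. -/
def pExp (p : ℝ) : ℝ≥0∞ := ENNReal.ofReal p

/-- The conjugate exponent `p'` of `p ∈ [1, ∞)`, as an extended nonnegative real. -/
def dualExp (p : ℝ) : ℝ≥0∞ := if p = 1 then ⊤ else ENNReal.ofReal (p / (p - 1))

/-- Test functions on `Ω`: smooth compactly supported functions with support inside `Ω`. -/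
def IsTestFun {n : ℕ} (Ω : Set (Euc n)) (φ : Euc n → ℝ) : Prop :=
  ContDiff ℝ (⊤ : ℕ∞) φ ∧ HasCompactSupport φ ∧ tsupport φ ⊆ Ω

/-- `v` is the `i`-th weak (distributional) partial derivative of `u` on `Ω`. -/
def HasWeakPDeriv {n : ℕ} (Ω : Set (Euc n)) (i : Fin n) (u v : Euc n → ℝ) : Prop :=
  ∀ φ : Euc n → ℝ, IsTestFun Ω φ →
    ∫ x in Ω, u x * fderiv ℝ φ x (EuclideanSpace.single i 1) = - ∫ x in Ω, v x * φ x

/-- `u ∈ W^{2,p}(Ω)`, with weak gradient `Du` and weak Hessian `D2u`. -/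
def MemW2p {n : ℕ} (Ω : Set (Euc n)) (p : ℝ) (u : Euc n → ℝ)
    (Du : Euc n → Fin n → ℝ) (D2u : Euc n → Matrix (Fin n) (Fin n) ℝ) : Prop :=
  MemLp u (pExp p) (volume.restrict Ω) ∧
  (∀ i, MemLp (fun x => Du x i) (pExp p) (volume.restrict Ω)) ∧
  (∀ i j, MemLp (fun x => D2u x i j) (pExp p) (volume.restrict Ω)) ∧
  (∀ i, HasWeakPDeriv Ω i u (fun x => Du x i)) ∧
  (∀ i j, HasWeakPDeriv Ω j (fun x => Du x i) (fun x => D2u x i j))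

/-- The `W^{2,p}(Ω)`-norm of `u` (expressed through its weak gradient and Hessian). -/
def W2pNorm {n : ℕ} (Ω : Set (Euc n)) (p : ℝ) (u : Euc n → ℝ)
    (Du : Euc n → Fin n → ℝ) (D2u : Euc n → Matrix (Fin n) (Fin n) ℝ) : ℝ :=
  (eLpNorm u (pExp p) (volume.restrict Ω)).toReal +
  (∑ i, (eLpNorm (fun x => Du x i) (pExp p) (volume.restrict Ω)).toReal) +
  (∑ i, ∑ j, (eLpNorm (fun x => D2u x i j) (pExp p) (volume.restrict Ω)).toReal)

/-- Weak convergence `u_j ⇀ v` in `W^{2,p}(Ω)`: boundedness in norm together with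
convergence of `u_j`, `Du_j`, `D²u_j` tested against arbitrary `L^{p'}` functions. -/
def WeakW2pTendsto {n : ℕ} (Ω : Set (Euc n)) (p : ℝ)
    (u : ℕ → Euc n → ℝ) (Du : ℕ → Euc n → Fin n → ℝ)
    (D2u : ℕ → Euc n → Matrix (Fin n) (Fin n) ℝ)
    (v : Euc n → ℝ) (Dv : Euc n → Fin n → ℝ)
    (D2v : Euc n → Matrix (Fin n) (Fin n) ℝ) : Prop :=
  (∃ M : ℝ, ∀ j, W2pNorm Ω p (u j) (Du j) (D2u j) ≤ M) ∧
  (∀ g : Euc n → ℝ, MemLp g (dualExp p) (volume.restrict Ω) →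
    Tendsto (fun j => ∫ x in Ω, u j x * g x) atTop (𝓝 (∫ x in Ω, v x * g x)) ∧
    (∀ i, Tendsto (fun j => ∫ x in Ω, Du j x i * g x) atTop
      (𝓝 (∫ x in Ω, Dv x i * g x))) ∧
    (∀ i l, Tendsto (fun j => ∫ x in Ω, D2u j x i l * g x) atTop
      (𝓝 (∫ x in Ω, D2v x i l * g x))))

/-- `u ∈ W^{1,p}(Ω, ℝⁿ)`, with weak Jacobian matrix `Du`. -/
def MemW1pMap {n : ℕ} (Ω : Set (Euc n)) (p : ℝ) (u : Euc n → Euc n)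
    (Du : Euc n → Matrix (Fin n) (Fin n) ℝ) : Prop :=
  (∀ i, MemLp (fun x => u x i) (pExp p) (volume.restrict Ω)) ∧
  (∀ i j, MemLp (fun x => Du x i j) (pExp p) (volume.restrict Ω)) ∧
  (∀ i j, HasWeakPDeriv Ω j (fun x => u x i) (fun x => Du x i j))

/-- The `W^{1,p}(Ω,ℝⁿ)`-norm of a map `u` with weak Jacobian `Du`. -/
def W1pNorm {n : ℕ} (Ω : Set (Euc n)) (p : ℝ) (u : Euc n → Euc n)
    (Du : Euc n → Matrix (Fin n) (Fin n) ℝ) : ℝ :=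
  (∑ i, (eLpNorm (fun x => u x i) (pExp p) (volume.restrict Ω)).toReal) +
  (∑ i, ∑ j, (eLpNorm (fun x => Du x i j) (pExp p) (volume.restrict Ω)).toReal)

/-- Weak convergence `u_j ⇀ v` in `W^{1,p}(Ω,ℝⁿ)`. -/
def WeakW1pTendsto {n : ℕ} (Ω : Set (Euc n)) (p : ℝ)
    (u : ℕ → Euc n → Euc n) (Du : ℕ → Euc n → Matrix (Fin n) (Fin n) ℝ)
    (v : Euc n → Euc n) (Dv : Euc n → Matrix (Fin n) (Fin n) ℝ) : Prop :=
  (∃ M : ℝ, ∀ j, W1pNorm Ω p (u j) (Du j) ≤ M) ∧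
  (∀ g : Euc n → ℝ, MemLp g (dualExp p) (volume.restrict Ω) →
    (∀ i, Tendsto (fun j => ∫ x in Ω, u j x i * g x) atTop
      (𝓝 (∫ x in Ω, v x i * g x))) ∧
    (∀ i l, Tendsto (fun j => ∫ x in Ω, Du j x i l * g x) atTop
      (𝓝 (∫ x in Ω, Dv x i l * g x))))

/-- `Ω` is a bounded open set with Lipschitz boundary: near every boundary point,
after choosing a unit direction `v`, the set `Ω` is the open region above the graph of a
Lipschitz function on the hyperplane orthogonal to `v`. -/
def IsLipschitzDomain {n : ℕ} (Ω : Set (Euc n)) : Prop :=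
  IsOpen Ω ∧ Bornology.IsBounded Ω ∧
  ∀ x ∈ frontier Ω, ∃ v : Euc n, ‖v‖ = 1 ∧ ∃ r > (0:ℝ), ∃ L : NNReal, ∃ φ : Euc n → ℝ,
    LipschitzWith L φ ∧
    ∀ y ∈ Metric.ball x r, (y ∈ Ω ↔ φ (y - (inner ℝ y v : ℝ) • v) < (inner ℝ y v : ℝ))

/-- The `α`-Hölder seminorm of `G` on the set `S`. -/
def holderSemi {n : ℕ} {F : Type*} [NormedAddCommGroup F] (α : ℝ) (S : Set (Euc n))
    (G : Euc n → F) : ℝ :=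
  sSup {c | ∃ x ∈ S, ∃ y ∈ S, x ≠ y ∧ c = ‖G y - G x‖ / dist y x ^ α}

/-- The sup-norm of `f` on the set `S`. -/
def supNorm {n : ℕ} {F : Type*} [NormedAddCommGroup F] (S : Set (Euc n)) (f : Euc n → F) : ℝ :=
  sSup ((fun x => ‖f x‖) '' S)

/-- The `C^{1,α}(S)` norm of a function `u` whose (extended) derivative is `G`. -/
def C1AlphaNorm {n : ℕ} (α : ℝ) (S : Set (Euc n)) (u : Euc n → ℝ)
    (G : Euc n → Euc n →L[ℝ] ℝ) : ℝ :=
  supNorm S u + supNorm S G + holderSemi α S G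

/-- The `C^{0,α}(S)` norm of a map `u`. -/
def C0AlphaNorm {n : ℕ} {F : Type*} [NormedAddCommGroup F] (α : ℝ) (S : Set (Euc n))
    (u : Euc n → F) : ℝ :=
  supNorm S u + holderSemi α S u

/-- `u` belongs to the little Hölder space `c^{1,α}` on `S = closure U`: `u` is differentiable
on the open set `U` with derivative `G`, `u` and `G` extend continuously to `S`, and the
`α`-Hölder modulus of continuity `ω(G, r^α)` of `G` tends to `0` as `r → 0`. -/
def MemLittleHolderC1 {n : ℕ} (α : ℝ) (U S : Set (Euc n)) (u : Euc n → ℝ)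
    (G : Euc n → Euc n →L[ℝ] ℝ) : Prop :=
  (∀ x ∈ U, HasFDerivAt u (G x) x) ∧
  ContinuousOn u S ∧ ContinuousOn G S ∧
  (∀ ε > (0:ℝ), ∃ δ > (0:ℝ), ∀ x ∈ S, ∀ y ∈ S, dist y x < δ →
    ‖G y - G x‖ ≤ ε * dist y x ^ α)

/-- `u` belongs to the little Hölder space `c^{0,α}(S)`. -/
def MemLittleHolderC0 {n : ℕ} {F : Type*} [NormedAddCommGroup F] (α : ℝ) (S : Set (Euc n))
    (u : Euc n → F) : Prop :=
  ContinuousOn u S ∧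
  (∀ ε > (0:ℝ), ∃ δ > (0:ℝ), ∀ x ∈ S, ∀ y ∈ S, dist y x < δ →
    ‖u y - u x‖ ≤ ε * dist y x ^ α)

/-- The modulus of continuity `ω(G, t) = sup {‖G y - G x‖ : x, y ∈ S, |y - x| ≤ t}`. -/
def modCont {n : ℕ} {F : Type*} [NormedAddCommGroup F] (S : Set (Euc n)) (G : Euc n → F)
    (t : ℝ) : ℝ :=
  sSup {c | ∃ x ∈ S, ∃ y ∈ S, dist y x ≤ t ∧ c = ‖G y - G x‖}
section AuxProof
open Matrix Filter Topology MeasureTheory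


/-- Newton/heron style iteration converging to `Real.sqrt` on `[0,1]`. -/
def newt : ℕ → ℝ → ℝ
  | 0, _ => 0
  | (l+1), t => newt l t + (t - (newt l t)^2)/2

lemma newt_bounds {t : ℝ} (h0 : 0 ≤ t) (h1 : t ≤ 1) :
    ∀ l, 0 ≤ newt l t ∧ newt l t ≤ Real.sqrt t := by
  intro l
  induction l with
  | zero => exact ⟨le_rfl, Real.sqrt_nonneg t⟩
  | succ l ih =>
    obtain ⟨h0l, h1l⟩ := ih
    have hsq : (newt l t)^2 ≤ t := by
      have := pow_le_pow_left₀ h0l h1l 2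
      rwa [Real.sq_sqrt h0] at this
    constructor
    · have : 0 ≤ (t - (newt l t)^2)/2 := by linarith
      simp only [newt]; linarith
    · have hs1 : Real.sqrt t ≤ 1 := by
        rw [show (1:ℝ) = Real.sqrt 1 by simp]; exact Real.sqrt_le_sqrt h1
    -- sqrt t - newt (l+1) t = (sqrt t - newt l t) * (1 - (sqrt t + newt l t)/2)
      have key : Real.sqrt t - newt (l+1) t
          = (Real.sqrt t - newt l t) * (1 - (Real.sqrt t + newt l t)/2) := by
        simp only [newt]
        have : t = (Real.sqrt t)^2 := (Real.sq_sqrt h0).symm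
        ring_nf
        nlinarith [Real.sq_sqrt h0]
      have h2 : 0 ≤ 1 - (Real.sqrt t + newt l t)/2 := by
        have : newt l t ≤ 1 := h1l.trans hs1
        linarith
      nlinarith

lemma newt_mono {t : ℝ} (h0 : 0 ≤ t) (h1 : t ≤ 1) : Monotone (fun l => newt l t) := by
  apply monotone_nat_of_le_succ
  intro l
  obtain ⟨ha, hb⟩ := newt_bounds h0 h1 l
  have hsq : (newt l t)^2 ≤ t := by
    have := pow_le_pow_left₀ ha hb 2
    rwa [Real.sq_sqrt h0] at this
  simp only [newt]; linarith

lemma newt_tendsto {t : ℝ} (h0 : 0 ≤ t) (h1 : t ≤ 1) :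
    Tendsto (fun l => newt l t) atTop (𝓝 (Real.sqrt t)) := by
  have hbdd : BddAbove (Set.range fun l => newt l t) :=
    ⟨Real.sqrt t, by rintro _ ⟨l, rfl⟩; exact (newt_bounds h0 h1 l).2⟩
  have hlim := tendsto_atTop_ciSup (newt_mono h0 h1) hbdd
  set L := ⨆ l, newt l t with hL
  have hL0 : 0 ≤ L := le_ciSup hbdd 0
  have hLs : L ≤ Real.sqrt t := ciSup_le fun l => (newt_bounds h0 h1 l).2
  -- the shifted sequence tends to both L and L + (t - L^2)/2
  have h1' : Tendsto (fun l => newt (l+1) t) atTop (𝓝 L) :=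
    hlim.comp (tendsto_add_atTop_nat 1)
  have h2' : Tendsto (fun l => newt (l+1) t) atTop (𝓝 (L + (t - L^2)/2)) := by
    have : Tendsto (fun l => newt l t + (t - (newt l t)^2)/2) atTop
        (𝓝 (L + (t - L^2)/2)) := by
      exact hlim.add (((hlim.pow 2).const_sub t).div_const 2)
    simpa only [newt] using this
  have hfix : L + (t - L^2)/2 = L := tendsto_nhds_unique h2' h1'
  have hL2 : L^2 = t := by linarith
  have : L = Real.sqrt t := by
    rw [← hL2, Real.sqrt_sq hL0]
  rwa [this] at hlim


variable {N : Type*} [Fintype N] [DecidableEq N]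

/-- conjugated diagonal matrix -/
def conjd (U : Matrix N N ℝ) (d : N → ℝ) : Matrix N N ℝ :=
  U * Matrix.diagonal d * star U

lemma conjd_zero (U : Matrix N N ℝ) : conjd U (fun _ => 0) = 0 := by
  simp [conjd]

lemma conjd_add (U : Matrix N N ℝ) (d e : N → ℝ) :
    conjd U d + conjd U e = conjd U (fun i => d i + e i) := by
  rw [conjd, conjd, conjd, ← Matrix.diagonal_add, Matrix.mul_add, Matrix.add_mul]

lemma conjd_sub (U : Matrix N N ℝ) (d e : N → ℝ) :
    conjd U d - conjd U e = conjd U (fun i => d i - e i) := by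
  rw [conjd, conjd, conjd, ← Matrix.diagonal_sub, Matrix.mul_sub, Matrix.sub_mul]

lemma conjd_smul (U : Matrix N N ℝ) (c : ℝ) (d : N → ℝ) :
    c • conjd U d = conjd U (fun i => c • d i) := by
  rw [conjd, conjd, ← Matrix.smul_mul, ← Matrix.mul_smul, ← Matrix.diagonal_smul]
  rfl

lemma conjd_mul {U : Matrix N N ℝ} (hU : star U * U = 1) (d e : N → ℝ) :
    conjd U d * conjd U e = conjd U (fun i => d i * e i) := by
  simp only [conjd]
  calc U * diagonal d * star U * (U * diagonal e * star U)
      = U * diagonal d * (star U * U) * (diagonal e * star U) := by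
        simp only [Matrix.mul_assoc]
    _ = U * (diagonal d * diagonal e) * star U := by
        rw [hU]; simp only [Matrix.mul_one, Matrix.mul_assoc]
    _ = _ := by rw [Matrix.diagonal_mul_diagonal]

lemma conjd_one {U : Matrix N N ℝ} (hU' : U * star U = 1) :
    conjd U (fun _ => 1) = 1 := by
  rw [conjd, Matrix.diagonal_one, Matrix.mul_one, hU']

lemma conjd_pow {U : Matrix N N ℝ} (hU : star U * U = 1) (hU' : U * star U = 1)
    (d : N → ℝ) (r : ℕ) :
    conjd U d ^ r = conjd U (fun i => d i ^ r) := by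
  induction r with
  | zero => simp only [pow_zero, conjd_one hU']
  | succ r ih => rw [pow_succ, ih, conjd_mul hU]; simp only [← pow_succ]

lemma trace_conjd {U : Matrix N N ℝ} (hU : star U * U = 1) (d : N → ℝ) :
    Matrix.trace (conjd U d) = ∑ i, d i := by
  rw [conjd, Matrix.trace_mul_cycle, hU, Matrix.one_mul, Matrix.trace_diagonal]

/-- matrix Newton iteration -/
def miter (A : Matrix N N ℝ) : ℕ → Matrix N N ℝ
  | 0 => 0
  | (l+1) => miter A l + (2⁻¹:ℝ) • (A - miter A l * miter A l)


lemma miter_conjd {U : Matrix N N ℝ} (hU : star U * U = 1) (d : N → ℝ) (l : ℕ) :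
    miter (conjd U d) l = conjd U (fun i => newt l (d i)) := by
  induction l with
  | zero => simp only [miter, newt, (conjd_zero U).symm]
  | succ l ih =>
    rw [miter, ih, conjd_mul hU, conjd_sub, conjd_smul, conjd_add]
    exact congrArg (conjd U) (funext fun i => by simp only [newt, smul_eq_mul]; ring)

lemma continuous_miter {X : Type*} [TopologicalSpace X] {A : X → Matrix N N ℝ}
    (hA : Continuous A) (l : ℕ) : Continuous fun x => miter (A x) l := by
  induction l with
  | zero => simpa only [miter] using continuous_const
  | succ l ih =>
    simp only [miter]
    exact ih.add (((hA.sub (ih.matrix_mul ih))).const_smul (2⁻¹:ℝ))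


-- ## Spectral helpers

lemma herm_conjd {n : ℕ} {A : Matrix (Fin n) (Fin n) ℝ} (hA : A.IsHermitian) :
    A = conjd (hA.eigenvectorUnitary : Matrix (Fin n) (Fin n) ℝ) hA.eigenvalues := by
  conv_lhs => rw [hA.spectral_theorem]
  rw [conjd, RCLike.ofReal_real_eq_id, Function.id_comp]
  rw [Unitary.conjStarAlgAut_apply]




section main
variable {n : ℕ} {X : Type*} [TopologicalSpace X] [MeasurableSpace X] [OpensMeasurableSpace X]
variable {H : X → Matrix (Fin n) (Fin n) ℝ}

lemma star_unitary (B : Matrix (Fin n) (Fin n) ℝ) :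
    star ((Matrix.isHermitian_conjTranspose_mul_self B).eigenvectorUnitary : Matrix (Fin n) (Fin n) ℝ)
      * ((Matrix.isHermitian_conjTranspose_mul_self B).eigenvectorUnitary : Matrix (Fin n) (Fin n) ℝ) = 1 :=
  Unitary.coe_star_mul_self _

lemma unitary_star (B : Matrix (Fin n) (Fin n) ℝ) :
    ((Matrix.isHermitian_conjTranspose_mul_self B).eigenvectorUnitary : Matrix (Fin n) (Fin n) ℝ)
      * star ((Matrix.isHermitian_conjTranspose_mul_self B).eigenvectorUnitary : Matrix (Fin n) (Fin n) ℝ) = 1 :=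
  Unitary.coe_mul_star_self _

lemma trace_eq_sum_eig (B : Matrix (Fin n) (Fin n) ℝ) :
    Matrix.trace (Bᴴ * B) = ∑ i, (Matrix.isHermitian_conjTranspose_mul_self B).eigenvalues i := by
  conv_lhs => rw [herm_conjd (Matrix.isHermitian_conjTranspose_mul_self B)]
  exact trace_conjd (star_unitary B) _

lemma trace_nonneg_eig (B : Matrix (Fin n) (Fin n) ℝ) :
    0 ≤ Matrix.trace (Bᴴ * B) := by
  rw [trace_eq_sum_eig]
  exact Finset.sum_nonneg fun i _ => Matrix.eigenvalues_conjTranspose_mul_self_nonneg B i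

lemma eig_le_trace (B : Matrix (Fin n) (Fin n) ℝ) (i : Fin n) :
    (Matrix.isHermitian_conjTranspose_mul_self B).eigenvalues i ≤ Matrix.trace (Bᴴ * B) := by
  rw [trace_eq_sum_eig]
  exact Finset.single_le_sum
    (fun j _ => Matrix.eigenvalues_conjTranspose_mul_self_nonneg B j) (Finset.mem_univ i)

/-- Key measurability: power sums of singular values of a continuous matrix field. -/
lemma measurable_svPowSum (hH : Continuous H) (r : ℕ) :
    Measurable fun x => ∑ i, (singularValues (H x) i)^r := by
  classical
  set M : X → Matrix (Fin n) (Fin n) ℝ := fun x => (H x)ᴴ * (H x) with hM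
  have hMc : Continuous M := (hH.matrix_conjTranspose).matrix_mul hH
  set s : X → ℝ := fun x => 1 + Matrix.trace (M x) with hs
  have hsc : Continuous s := continuous_const.add hMc.matrix_trace
  have hs1 : ∀ x, 1 ≤ s x := fun x => le_add_of_nonneg_right (trace_nonneg_eig (H x))
  have hsne : ∀ x, s x ≠ 0 := fun x => by have := hs1 x; positivity
  set appr : ℕ → X → ℝ :=
    fun l x => (Real.sqrt (s x))^r * Matrix.trace ((miter ((s x)⁻¹ • M x) l)^r) with happr
  have hac : ∀ l, Measurable (appr l) := by
    intro l
    have h1 : Continuous fun x => (s x)⁻¹ • M x :=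
      (hsc.inv₀ hsne).smul hMc
    exact (((hsc.sqrt.pow r).mul
      ((((continuous_miter h1 l).pow r)).matrix_trace))).measurable
  apply measurable_of_tendsto_metrizable hac
  rw [tendsto_pi_nhds]
  intro x
  -- pointwise convergence at x
  set hMx := Matrix.isHermitian_conjTranspose_mul_self (H x)
  set U : Matrix (Fin n) (Fin n) ℝ := (hMx.eigenvectorUnitary : Matrix (Fin n) (Fin n) ℝ) with hU
  have hU1 : star U * U = 1 := star_unitary (H x)
  have hU2 : U * star U = 1 := unitary_star (H x)
  set lam : Fin n → ℝ := hMx.eigenvalues with hlam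
  have hspec : M x = conjd U lam := herm_conjd hMx
  have hscaled : (s x)⁻¹ • M x = conjd U (fun i => (s x)⁻¹ • lam i) := by
    rw [hspec, conjd_smul]
  have hin : ∀ i, (s x)⁻¹ * lam i ∈ Set.Icc (0:ℝ) 1 := by
    intro i
    have h0 : 0 ≤ lam i := Matrix.eigenvalues_conjTranspose_mul_self_nonneg (H x) i
    have hle : lam i ≤ s x := by
      have h2 := eig_le_trace (H x) i
      have : s x = 1 + Matrix.trace ((H x)ᴴ * (H x)) := rfl
      rw [this]; linarith
    have hpos : (0:ℝ) < s x := lt_of_lt_of_le zero_lt_one (hs1 x)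
    constructor
    · exact mul_nonneg (inv_nonneg.mpr hpos.le) h0
    · rw [inv_mul_le_iff₀ hpos]
      simpa using hle
  have htr : ∀ l, appr l x = (Real.sqrt (s x))^r * ∑ i, (newt l ((s x)⁻¹ * lam i))^r := by
    intro l
    rw [happr]
    simp only
    rw [hscaled, miter_conjd hU1, conjd_pow hU1 hU2, trace_conjd hU1]
    simp only [smul_eq_mul]
  have hlim : Tendsto (fun l => appr l x) atTop
      (𝓝 ((Real.sqrt (s x))^r * ∑ i, (Real.sqrt ((s x)⁻¹ * lam i))^r)) := by
    simp only [htr]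
    apply Tendsto.const_mul
    apply tendsto_finset_sum
    intro i _
    exact (newt_tendsto (hin i).1 (hin i).2).pow r
  convert hlim using 2
  rw [Finset.mul_sum]
  apply Finset.sum_congr rfl
  intro i _
  rw [← mul_pow, ← Real.sqrt_mul (le_trans zero_le_one (hs1 x)),
    mul_inv_cancel_left₀ (hsne x)]
  rfl

lemma Sk_zero {n : ℕ} (μ : Fin n → ℝ) : Sk 0 μ = 1 := by
  simp [Sk]

lemma eval_esymm {n : ℕ} (μ : Fin n → ℝ) (j : ℕ) :
    MvPolynomial.eval μ (MvPolynomial.esymm (Fin n) ℝ j) = Sk j μ := by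
  simp [MvPolynomial.esymm, Sk, map_sum]

lemma eval_psum {n : ℕ} (μ : Fin n → ℝ) (j : ℕ) :
    MvPolynomial.eval μ (MvPolynomial.psum (Fin n) ℝ j) = ∑ i, μ i ^ j := by
  simp [MvPolynomial.psum]

lemma newton_Sk {n : ℕ} (k : ℕ) (μ : Fin n → ℝ) :
    (k:ℝ) * Sk k μ = (-1:ℝ)^(k+1) *
      ∑ a ∈ (Finset.HasAntidiagonal.antidiagonal k).filter (fun a => a.1 < k),
        (-1:ℝ)^a.1 * Sk a.1 μ * (∑ i, μ i ^ a.2) := by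
  have h := congrArg (MvPolynomial.eval μ) (MvPolynomial.mul_esymm_eq_sum (Fin n) ℝ k)
  simpa [map_sum, eval_esymm, eval_psum] using h

/-- Measurability of elementary symmetric functions of singular values. -/
lemma measurable_Sk_sv (hH : Continuous H) (k : ℕ) :
    Measurable fun x => Sk k (singularValues (H x)) := by
  induction k using Nat.strong_induction_on with
  | _ k ih =>
    match k with
    | 0 =>
      simp only [Sk_zero]
      exact measurable_const
    | (k+1) =>
      have key : ∀ x : X, Sk (k+1) (singularValues (H x)) =
          (((k:ℝ)+1))⁻¹ * ((-1:ℝ)^(k+1+1) *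
          ∑ a ∈ (Finset.HasAntidiagonal.antidiagonal (k+1)).filter (fun a => a.1 < k+1),
            (-1:ℝ)^a.1 * Sk a.1 (singularValues (H x)) * (∑ i, singularValues (H x) i ^ a.2)) := by
        intro x
        have h := newton_Sk (k+1) (singularValues (H x))
        push_cast at h ⊢
        field_simp
        linarith [h]
      simp only [key]
      apply Measurable.const_mul
      apply Measurable.const_mul
      apply Finset.measurable_sum
      intro a ha
      have ha1 : a.1 < k + 1 := (Finset.mem_filter.mp ha).2
      exact ((ih a.1 ha1).const_mul _).mul (measurable_svPowSum hH a.2)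
end main

-- ## Hessian continuity and Ck bounds


lemma continuous_hess {n : ℕ} {F : Euc n → ℝ} (hF : ContDiff ℝ 2 F) :
    Continuous fun x => hess F x := by
  apply continuous_matrix
  intro i j
  have h1 : ContDiff ℝ 1 (fderiv ℝ F) := hF.fderiv_right (by norm_num)
  have hgj : ContDiff ℝ 1 (fun y => fderiv ℝ F y (EuclideanSpace.single j 1)) :=
    h1.clm_apply contDiff_const
  have : Continuous (fderiv ℝ (fun y => fderiv ℝ F y (EuclideanSpace.single j 1))) :=
    hgj.continuous_fderiv one_ne_zero
  exact this.clm_apply continuous_const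

lemma sv_nonneg {n : ℕ} (A : Matrix (Fin n) (Fin n) ℝ) (i : Fin n) :
    0 ≤ singularValues A i := Real.sqrt_nonneg _

lemma Sk_nonneg {n : ℕ} (k : ℕ) {μ : Fin n → ℝ} (h : ∀ i, 0 ≤ μ i) : 0 ≤ Sk k μ :=
  Finset.sum_nonneg fun s _ => Finset.prod_nonneg fun i _ => h i

lemma sv_le_one_add_trace {n : ℕ} (B : Matrix (Fin n) (Fin n) ℝ) (i : Fin n) :
    singularValues B i ≤ 1 + Matrix.trace (Bᴴ * B) := by
  have h1 : singularValues B i ≤ Real.sqrt (Matrix.trace (Bᴴ * B)) :=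
    Real.sqrt_le_sqrt (eig_le_trace B i)
  have h2 : Real.sqrt (Matrix.trace (Bᴴ * B)) ≤ 1 + Matrix.trace (Bᴴ * B) := by
    have h3 := Real.sq_sqrt (trace_nonneg_eig B)
    nlinarith [Real.sqrt_nonneg (Matrix.trace (Bᴴ * B))]
  linarith

lemma Sk_le_of_le {n : ℕ} (k : ℕ) {μ : Fin n → ℝ} {c : ℝ} (hc : 0 ≤ c)
    (h0 : ∀ i, 0 ≤ μ i) (h1 : ∀ i, μ i ≤ c) :
    Sk k μ ≤ ((Finset.powersetCard k (Finset.univ : Finset (Fin n))).card : ℝ) * c^k := by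
  rw [Sk]
  calc ∑ s ∈ Finset.powersetCard k Finset.univ, ∏ i ∈ s, μ i
      ≤ ∑ s ∈ Finset.powersetCard k (Finset.univ : Finset (Fin n)), c^k := by
        apply Finset.sum_le_sum
        intro t ht
        have hcard : t.card = k := (Finset.mem_powersetCard.mp ht).2
        calc ∏ i ∈ t, μ i ≤ ∏ _i ∈ t, c :=
              Finset.prod_le_prod (fun i _ => h0 i) (fun i _ => h1 i)
          _ = c ^ k := by rw [Finset.prod_const, hcard]
    _ = _ := by rw [Finset.sum_const, nsmul_eq_mul]

/-- Integrability of `Sk k ∘ singularValues ∘ H` on a compact set. -/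
lemma integrableOn_Sk_sv {n : ℕ} {X : Type*} [MeasureTheory.MeasureSpace X] [TopologicalSpace X]
    [OpensMeasurableSpace X] {H : X → Matrix (Fin n) (Fin n) ℝ} (hH : Continuous H)
    (k : ℕ) {Q : Set X} (hQc : IsCompact Q) (hQm : MeasurableSet Q)
    [MeasureTheory.IsFiniteMeasureOnCompacts (MeasureTheory.volume (α := X))] :
    MeasureTheory.IntegrableOn (fun x => Sk k (singularValues (H x))) Q := by
  haveI : MeasureTheory.IsFiniteMeasure (MeasureTheory.volume.restrict Q) :=
    ⟨by rw [MeasureTheory.Measure.restrict_apply_univ]; exact hQc.measure_lt_top⟩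
  have htc : Continuous fun x => Matrix.trace ((H x)ᴴ * (H x)) :=
    ((hH.matrix_conjTranspose).matrix_mul hH).matrix_trace
  obtain ⟨C, hC⟩ := hQc.exists_bound_of_continuousOn htc.continuousOn
  set c : ℝ := 1 + max C 0 with hc
  have hc0 : (0:ℝ) ≤ c := by positivity
  apply MeasureTheory.Integrable.mono'
    (MeasureTheory.integrable_const
      (((Finset.powersetCard k (Finset.univ : Finset (Fin n))).card : ℝ) * c^k))
    ((measurable_Sk_sv hH k).aestronglyMeasurable)
  apply MeasureTheory.ae_restrict_of_forall_mem hQm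
  intro x hx
  have h0 : ∀ i, 0 ≤ singularValues (H x) i := sv_nonneg (H x)
  have h1 : ∀ i, singularValues (H x) i ≤ c := by
    intro i
    refine (sv_le_one_add_trace (H x) i).trans ?_
    have := hC x hx
    have h2 : Matrix.trace ((H x)ᴴ * (H x)) ≤ max C 0 :=
      le_trans (le_abs_self _) (le_max_of_le_left (by simpa using this))
    linarith
  rw [Real.norm_eq_abs, abs_of_nonneg (Sk_nonneg k h0)]
  exact Sk_le_of_le k hc0 h0 h1




lemma gridCube_eq_preimage {n : ℕ} (m : ℕ) (z : Fin n → ℕ) :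
    gridCube m z = (MeasurableEquiv.toLp 2 (Fin n → ℝ)).symm ⁻¹'
      (Set.univ.pi fun i => Set.Icc ((z i:ℝ)/m) (((z i:ℝ)+1)/m)) := by
  ext x
  simp only [gridCube, Set.mem_setOf_eq, Set.mem_preimage, Set.mem_univ_pi]
  rfl

lemma measurableSet_gridCube {n : ℕ} (m : ℕ) (z : Fin n → ℕ) :
    MeasurableSet (gridCube m z) := by
  rw [gridCube_eq_preimage]
  exact (MeasurableEquiv.toLp 2 (Fin n → ℝ)).symm.measurable
    (MeasurableSet.univ_pi fun i => measurableSet_Icc)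

lemma volume_gridCube {n : ℕ} {m : ℕ} (hm : 0 < m) (z : Fin n → ℕ) :
    volume (gridCube m z) = ENNReal.ofReal ((1:ℝ)/m) ^ n := by
  rw [gridCube_eq_preimage,
    (EuclideanSpace.volume_preserving_symm_measurableEquiv_toLp (Fin n)).measure_preimage
      ((MeasurableSet.univ_pi fun i => measurableSet_Icc).nullMeasurableSet),
    volume_pi_pi]
  have h : ∀ i : Fin n, volume (Set.Icc ((z i:ℝ)/m) (((z i:ℝ)+1)/m))
      = ENNReal.ofReal ((1:ℝ)/m) := by
    intro i
    rw [Real.volume_Icc]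
    congr 1
    have hm' : (m:ℝ) ≠ 0 := Nat.cast_ne_zero.mpr hm.ne'
    field_simp
    ring
  simp only [h, Finset.prod_const, Finset.card_univ, Fintype.card_fin]

lemma closedUnitCube_eq {n : ℕ} : closedUnitCube n = gridCube 1 (fun _ => 0) := by
  ext x
  simp [closedUnitCube, gridCube]

lemma isCompact_gridCube {n : ℕ} (m : ℕ) (z : Fin n → ℕ) :
    IsCompact (gridCube m z) := by
  have heq : gridCube m z = (EuclideanSpace.equiv (Fin n) ℝ).toHomeomorph ⁻¹'
      (Set.univ.pi fun i => Set.Icc ((z i:ℝ)/m) (((z i:ℝ)+1)/m)) := by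
    ext x
    simp only [gridCube, Set.mem_setOf_eq, Set.mem_preimage, Set.mem_univ_pi]
    rfl
  rw [heq, Homeomorph.isCompact_preimage]
  exact isCompact_univ_pi fun i => isCompact_Icc

lemma convex_gridCube {n : ℕ} (m : ℕ) (z : Fin n → ℕ) :
    Convex ℝ (gridCube m z) := by
  intro x hx y hy a b ha hb hab i
  have h := (convex_Icc ((z i:ℝ)/m) (((z i:ℝ)+1)/m)) (hx i) (hy i) ha hb hab
  simpa [PiLp.add_apply, PiLp.smul_apply, smul_eq_mul] using h

lemma volume_hyperplane {n : ℕ} (i : Fin n) (c : ℝ) :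
    volume {x : Euc n | x i = c} = 0 := by
  have heq : {x : Euc n | x i = c} = (MeasurableEquiv.toLp 2 (Fin n → ℝ)).symm ⁻¹'
      (Set.univ.pi fun j => if j = i then {c} else Set.univ) := by
    ext x
    simp only [Set.mem_setOf_eq, Set.mem_preimage, Set.mem_univ_pi]
    constructor
    · intro h j
      by_cases hj : j = i
      · subst hj; simp only [if_pos rfl, Set.mem_singleton_iff]; exact h
      · simp [hj]
    · intro h
      have h2 := h i
      simp only [if_pos rfl, Set.mem_singleton_iff] at h2
      exact h2
  rw [heq,
    (EuclideanSpace.volume_preserving_symm_measurableEquiv_toLp (Fin n)).measure_preimage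
      ((MeasurableSet.univ_pi fun j => by
        split
        · exact measurableSet_singleton _
        · exact MeasurableSet.univ).nullMeasurableSet),
    volume_pi_pi]
  apply Finset.prod_eq_zero (Finset.mem_univ i)
  simp

lemma grid_cover {n : ℕ} {m : ℕ} (hm : 0 < m) :
    (⋃ z : Fin n → Fin m, gridCube m (fun i => (z i : ℕ))) = closedUnitCube n := by
  have hmR : (0:ℝ) < m := Nat.cast_pos.mpr hm
  apply Set.Subset.antisymm
  · rintro x hx
    obtain ⟨z, hz⟩ := Set.mem_iUnion.mp hx
    intro i
    obtain ⟨h1, h2⟩ := hz i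
    constructor
    · exact le_trans (by positivity) h1
    · refine le_trans h2 ?_
      rw [div_le_one hmR]
      exact_mod_cast Nat.succ_le_of_lt (z i).isLt
  · intro x hx
    have hz : ∀ i : Fin n, min ⌊x i * m⌋₊ (m-1) < m :=
      fun i => Nat.lt_of_le_of_lt (min_le_right _ _) (by omega)
    refine Set.mem_iUnion.mpr ⟨fun i => ⟨min ⌊x i * m⌋₊ (m-1), hz i⟩, fun i => ?_⟩
    obtain ⟨hx0, hx1⟩ := hx i
    simp only
    by_cases hc : ⌊x i * m⌋₊ ≤ m - 1
    · rw [min_eq_left hc]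
      constructor
      · rw [div_le_iff₀ hmR]
        exact Nat.floor_le (by positivity)
      · rw [le_div_iff₀ hmR]
        have := Nat.lt_floor_add_one (x i * m)
        push_cast at this ⊢
        linarith
    · push_neg at hc
      have hfl : (m:ℝ) ≤ x i * m := by
        have h1 : (m:ℕ) ≤ ⌊x i * m⌋₊ := by omega
        have := Nat.floor_le (show (0:ℝ) ≤ x i * m by positivity)
        calc (m:ℝ) ≤ (⌊x i * m⌋₊ : ℝ) := by exact_mod_cast h1
          _ ≤ x i * m := this
      have hx1' : x i = 1 := le_antisymm hx1 (by nlinarith)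
      rw [min_eq_right (by omega)]
      have hcast : ((m - 1 : ℕ) : ℝ) = (m:ℝ) - 1 := by
        have : (1:ℕ) ≤ m := hm
        push_cast [Nat.cast_sub this]
        ring
      rw [hcast, hx1']
      constructor
      · rw [div_le_one hmR]; linarith
      · rw [le_div_iff₀ hmR]; linarith

lemma grid_overlap_sub {n m : ℕ} (hm : 0 < m) {z z' : Fin n → ℕ} {i : Fin n}
    (hlt : z i < z' i) :
    gridCube m z ∩ gridCube m z' ⊆ {x : Euc n | x i = ((z i : ℝ) + 1)/m} := by
  have hmR : (0:ℝ) < m := Nat.cast_pos.mpr hm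
  rintro x ⟨hxz, hxz'⟩
  have h1 : x i ≤ ((z i : ℝ) + 1)/m := (hxz i).2
  have h2 : ((z' i : ℝ))/m ≤ x i := (hxz' i).1
  have h3 : ((z i : ℝ) + 1)/m ≤ ((z' i : ℝ))/m := by
    apply div_le_div_of_nonneg_right ?_ hmR.le
    exact_mod_cast Nat.succ_le_of_lt hlt
  exact le_antisymm h1 (le_trans h3 h2)

lemma grid_aedisjoint {n m : ℕ} (hm : 0 < m) {z z' : Fin n → ℕ} (hne : z ≠ z') :
    volume (gridCube m z ∩ gridCube m z') = 0 := by
  obtain ⟨i, hi⟩ := Function.ne_iff.mp hne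
  rcases lt_or_gt_of_ne hi with h | h
  · exact measure_mono_null (grid_overlap_sub hm h) (volume_hyperplane i _)
  · rw [Set.inter_comm]
    exact measure_mono_null (grid_overlap_sub hm h) (volume_hyperplane i _)

lemma norm_sub_le_in_grid {n m : ℕ} (hm : 0 < m) {z : Fin n → ℕ} {x y : Euc n}
    (hx : x ∈ gridCube m z) (hy : y ∈ gridCube m z) :
    ‖y - x‖ ≤ Real.sqrt n / m := by
  have hmR : (0:ℝ) < m := Nat.cast_pos.mpr hm
  rw [EuclideanSpace.norm_eq]
  have hb : ∀ i, ‖(y - x) i‖ ^ 2 ≤ (1/m)^2 := by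
    intro i
    have h1 := (hx i); have h2 := (hy i)
    have hsub : (y - x) i = y i - x i := rfl
    rw [hsub, Real.norm_eq_abs, sq_abs]
    have habs : |y i - x i| ≤ 1/m := by
      rw [abs_sub_le_iff]
      constructor
      · have := h1.1; have := h2.2
        have hgap : ((z i : ℝ) + 1)/m - (z i : ℝ)/m = 1/m := by field_simp; ring
        linarith [h1.1, h2.2]
      · have hgap : ((z i : ℝ) + 1)/m - (z i : ℝ)/m = 1/m := by field_simp; ring
        linarith [h2.1, h1.2]
    calc (y i - x i)^2 = |y i - x i|^2 := (sq_abs _).symm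
      _ ≤ (1/m)^2 := by
          apply pow_le_pow_left₀ (abs_nonneg _) habs
  calc Real.sqrt (∑ i, ‖(y - x) i‖ ^ 2) ≤ Real.sqrt (n * (1/m)^2) := by
        apply Real.sqrt_le_sqrt
        calc ∑ i, ‖(y - x) i‖ ^ 2 ≤ ∑ _i : Fin n, (1/m:ℝ)^2 :=
              Finset.sum_le_sum fun i _ => hb i
          _ = n * (1/m)^2 := by rw [Finset.sum_const, Finset.card_univ,
              Fintype.card_fin, nsmul_eq_mul]
    _ = Real.sqrt n / m := by
        rw [Real.sqrt_mul (Nat.cast_nonneg n), Real.sqrt_sq (by positivity)]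
        field_simp



end AuxProof

section AuxProof2
open Matrix Filter Topology

/-- (Testing cube-wise estimates against `C¹` functions.) Suppose
`F, G ∈ C²(Q₀)` satisfy `|∫_Q (C_k(∇²F) − C_k(∇²G))| ≤ ε |Q|` for each `Q ∈ 𝒬(m)` and
`∫_{Q₀} (C_k(∇²F) + C_k(∇²G)) ≤ 2K`. Then for every `φ ∈ C¹(Q₀)`,
`|∫_{Q₀} (C_k(∇²F) − C_k(∇²G)) φ| ≤ ε ‖φ‖_∞ + 2K (√n/m) ‖∇φ‖_∞`. -/
theorem cube_estimate_tested_against_C1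
    (n k : ℕ) (hk1 : 1 ≤ k) (hkn : k ≤ n) (m : ℕ) (hm : 0 < m)
    (ε K : ℝ) (hε : 0 < ε) (hK : 0 < K)
    (F G : Euc n → ℝ) (hF : ContDiff ℝ 2 F) (hG : ContDiff ℝ 2 G)
    (hcube : ∀ z : Fin n → ℕ, (∀ i, z i < m) →
      |∫ x in gridCube m z, (Ck k (hess F x) - Ck k (hess G x))| ≤
        ε * (volume (gridCube m z)).toReal)
    (hbound : (∫ x in closedUnitCube n, (Ck k (hess F x) + Ck k (hess G x))) ≤ 2 * K)
    (φ : Euc n → ℝ) (hφ : ContDiff ℝ 1 φ) :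
    |∫ x in closedUnitCube n, (Ck k (hess F x) - Ck k (hess G x)) * φ x| ≤
      ε * sSup ((fun x => |φ x|) '' closedUnitCube n) +
      2 * K * (Real.sqrt n / m) *
        sSup ((fun x => ‖fderiv ℝ φ x‖) '' closedUnitCube n) := by
  classical
  have hmR : (0:ℝ) < m := Nat.cast_pos.mpr hm
  set f : Euc n → ℝ := fun x => Ck k (hess F x) with hfdef
  set g : Euc n → ℝ := fun x => Ck k (hess G x) with hgdef
  have hFc : Continuous fun x => hess F x := continuous_hess hF
  have hGc : Continuous fun x => hess G x := continuous_hess hG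
  have hfm : Measurable f := measurable_Sk_sv hFc k
  have hgm : Measurable g := measurable_Sk_sv hGc k
  have hf0 : ∀ x, 0 ≤ f x := fun x => Sk_nonneg k (sv_nonneg _)
  have hg0 : ∀ x, 0 ≤ g x := fun x => Sk_nonneg k (sv_nonneg _)
  -- cube facts
  have hQ0c : IsCompact (closedUnitCube n) := by
    rw [closedUnitCube_eq]; exact isCompact_gridCube 1 _
  have hQ0m : MeasurableSet (closedUnitCube n) := by
    rw [closedUnitCube_eq]; exact measurableSet_gridCube 1 _
  have hfint : IntegrableOn f (closedUnitCube n) := integrableOn_Sk_sv hFc k hQ0c hQ0m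
  have hgint : IntegrableOn g (closedUnitCube n) := integrableOn_Sk_sv hGc k hQ0c hQ0m
  -- sup norms
  set S₁ := sSup ((fun x => |φ x|) '' closedUnitCube n) with hS1
  set S₂ := sSup ((fun x => ‖fderiv ℝ φ x‖) '' closedUnitCube n) with hS2
  have hφc : Continuous φ := hφ.continuous
  have hφ'c : Continuous (fderiv ℝ φ) := hφ.continuous_fderiv one_ne_zero
  have hbdd1 : BddAbove ((fun x => |φ x|) '' closedUnitCube n) :=
    (hQ0c.image_of_continuousOn hφc.abs.continuousOn).bddAbove
  have hbdd2 : BddAbove ((fun x => ‖fderiv ℝ φ x‖) '' closedUnitCube n) :=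
    (hQ0c.image_of_continuousOn hφ'c.norm.continuousOn).bddAbove
  have hS1le : ∀ x ∈ closedUnitCube n, |φ x| ≤ S₁ :=
    fun x hx => le_csSup hbdd1 ⟨x, hx, rfl⟩
  have hS2le : ∀ x ∈ closedUnitCube n, ‖fderiv ℝ φ x‖ ≤ S₂ :=
    fun x hx => le_csSup hbdd2 ⟨x, hx, rfl⟩
  have hQ0ne : (closedUnitCube n).Nonempty :=
    ⟨(EuclideanSpace.equiv (Fin n) ℝ).symm (fun _ => 0),
      fun i => ⟨le_rfl, zero_le_one⟩⟩
  obtain ⟨x₀, hx₀⟩ := hQ0ne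
  have hS1nn : 0 ≤ S₁ := le_trans (abs_nonneg _) (hS1le x₀ hx₀)
  have hS2nn : 0 ≤ S₂ := le_trans (norm_nonneg _) (hS2le x₀ hx₀)
  -- grid
  set Q : (Fin n → Fin m) → Set (Euc n) := fun z => gridCube m (fun i => (z i : ℕ)) with hQdef
  have hQm : ∀ z, MeasurableSet (Q z) := fun z => measurableSet_gridCube m _
  have hUnion : (⋃ z, Q z) = closedUnitCube n := grid_cover hm
  have hQsub : ∀ z, Q z ⊆ closedUnitCube n := by
    intro z
    rw [← hUnion]
    exact Set.subset_iUnion Q z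
  have hAED : Pairwise (Function.onFun (MeasureTheory.AEDisjoint volume) Q) := by
    intro z z' hzz
    have hne : (fun i => ((z i : ℕ))) ≠ (fun i => ((z' i : ℕ))) := by
      intro hcontra
      exact hzz (funext fun i => Fin.ext (congrFun hcontra i))
    exact grid_aedisjoint hm hne
  -- integrands
  set h : Euc n → ℝ := fun x => f x - g x with hhdef
  have habs : ∀ x, |h x| ≤ f x + g x := fun x =>
    abs_le.mpr ⟨by have := hf0 x; have := hg0 x; simp only [hhdef]; linarith,
      by have := hf0 x; have := hg0 x; simp only [hhdef]; linarith⟩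
  have hfgint : IntegrableOn (fun x => f x + g x) (closedUnitCube n) := hfint.add hgint
  have hhint : IntegrableOn h (closedUnitCube n) := hfint.sub hgint
  have hhφint : IntegrableOn (fun x => h x * φ x) (closedUnitCube n) := by
    apply MeasureTheory.Integrable.mono' (hfgint.const_mul S₁)
      (((hfm.sub hgm).mul hφc.measurable).aestronglyMeasurable)
    apply MeasureTheory.ae_restrict_of_forall_mem hQ0m
    intro x hx
    rw [Real.norm_eq_abs, Pi.mul_apply, abs_mul]
    calc |h x| * |φ x| ≤ (f x + g x) * S₁ :=
          mul_le_mul (habs x) (hS1le x hx) (abs_nonneg _)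
            (by have := hf0 x; have := hg0 x; linarith)
      _ = S₁ * (f x + g x) := by ring
  have hhz : ∀ z, IntegrableOn h (Q z) := fun z => hhint.mono_set (hQsub z)
  have hfgz : ∀ z, IntegrableOn (fun x => f x + g x) (Q z) :=
    fun z => hfgint.mono_set (hQsub z)
  have hhφz : ∀ z, IntegrableOn (fun x => h x * φ x) (Q z) :=
    fun z => hhφint.mono_set (hQsub z)
  -- additivity
  have hsplit : ∫ x in closedUnitCube n, h x * φ x = ∑ z, ∫ x in Q z, h x * φ x := by
    rw [← hUnion, MeasureTheory.integral_iUnion_ae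
      (fun z => (hQm z).nullMeasurableSet) hAED (hUnion ▸ hhφint), tsum_fintype]
  have hsplit2 : ∫ x in closedUnitCube n, (f x + g x) = ∑ z, ∫ x in Q z, (f x + g x) := by
    rw [← hUnion, MeasureTheory.integral_iUnion_ae
      (fun z => (hQm z).nullMeasurableSet) hAED (hUnion ▸ hfgint), tsum_fintype]
  -- volume of the small cubes
  have hvol : ∀ z, (volume (Q z)).toReal = ((1:ℝ)/m)^n := by
    intro z
    rw [hQdef]
    simp only
    rw [volume_gridCube hm, ENNReal.toReal_pow, ENNReal.toReal_ofReal (by positivity)]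
  -- per-cube estimate
  have key : ∀ z, |∫ x in Q z, h x * φ x| ≤
      ε * ((1:ℝ)/m)^n * S₁ + (∫ x in Q z, (f x + g x)) * (S₂ * (Real.sqrt n / m)) := by
    intro z
    set cz : Euc n := (EuclideanSpace.equiv (Fin n) ℝ).symm
      (fun i => (((z i : ℕ)):ℝ)/m) with hczdef
    have hcz : cz ∈ Q z := by
      intro i
      refine ⟨le_rfl, ?_⟩
      apply div_le_div_of_nonneg_right ?_ hmR.le
      linarith
    have hczQ0 : cz ∈ closedUnitCube n := hQsub z hcz
    have hint1 : IntegrableOn (fun x => h x * φ cz) (Q z) := (hhz z).mul_const _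
    have hint2 : IntegrableOn (fun x => h x * (φ x - φ cz)) (Q z) := by
      have he : (fun x => h x * (φ x - φ cz)) = fun x => h x * φ x - h x * φ cz :=
        funext fun x => by ring
      rw [he]
      exact (hhφz z).sub hint1
    have hdecomp : ∫ x in Q z, h x * φ x
        = (∫ x in Q z, h x) * φ cz + ∫ x in Q z, h x * (φ x - φ cz) := by
      have he : (fun x => h x * φ x) = fun x => h x * φ cz + h x * (φ x - φ cz) :=
        funext fun x => by ring
      calc ∫ x in Q z, h x * φ x
          = ∫ x in Q z, (h x * φ cz + h x * (φ x - φ cz)) := by rw [he]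
        _ = (∫ x in Q z, h x * φ cz) + ∫ x in Q z, h x * (φ x - φ cz) :=
            MeasureTheory.integral_add hint1 hint2
        _ = _ := by rw [MeasureTheory.integral_mul_const]
    -- first piece
    have hfirst : |∫ x in Q z, h x| ≤ ε * ((1:ℝ)/m)^n := by
      have happ := hcube (fun i => (z i : ℕ)) (fun i => (z i).isLt)
      rw [← hvol z]
      exact happ
    -- second piece
    have hsecond : |∫ x in Q z, h x * (φ x - φ cz)|
        ≤ (∫ x in Q z, (f x + g x)) * (S₂ * (Real.sqrt n / m)) := by
      rw [← MeasureTheory.integral_mul_const]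
      rw [← Real.norm_eq_abs]
      apply MeasureTheory.norm_integral_le_of_norm_le ((hfgz z).mul_const _)
      apply MeasureTheory.ae_restrict_of_forall_mem (hQm z)
      intro x hx
      rw [Real.norm_eq_abs, abs_mul]
      have hmv : |φ x - φ cz| ≤ S₂ * ‖x - cz‖ := by
        have := (convex_gridCube m (fun i => (z i : ℕ))).norm_image_sub_le_of_norm_fderiv_le
          (fun y _ => (hφ.differentiable one_ne_zero).differentiableAt)
          (fun y hy => hS2le y (hQsub z hy)) hcz hx
        simpa [Real.norm_eq_abs] using this
      have hdist : ‖x - cz‖ ≤ Real.sqrt n / m := norm_sub_le_in_grid hm hcz hx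
      exact mul_le_mul (habs x)
        (hmv.trans (mul_le_mul_of_nonneg_left hdist hS2nn)) (abs_nonneg _)
        (by have := hf0 x; have := hg0 x; linarith)
    rw [hdecomp]
    calc |(∫ x in Q z, h x) * φ cz + ∫ x in Q z, h x * (φ x - φ cz)|
        ≤ |(∫ x in Q z, h x) * φ cz| + |∫ x in Q z, h x * (φ x - φ cz)| := abs_add_le _ _
      _ ≤ ε * ((1:ℝ)/m)^n * S₁ + (∫ x in Q z, (f x + g x)) * (S₂ * (Real.sqrt n / m)) := by
          apply add_le_add ?_ hsecond
          rw [abs_mul]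
          exact mul_le_mul hfirst (hS1le cz hczQ0) (abs_nonneg _) (by positivity)
  -- summation
  have hcard : (Fintype.card (Fin n → Fin m) : ℝ) = (m:ℝ)^n := by
    rw [Fintype.card_fun]
    push_cast
    simp
  have hfinal : |∫ x in closedUnitCube n, h x * φ x| ≤
      ε * S₁ + (∫ x in closedUnitCube n, (f x + g x)) * (S₂ * (Real.sqrt n / m)) := by
    rw [hsplit]
    calc |∑ z, ∫ x in Q z, h x * φ x| ≤ ∑ z, |∫ x in Q z, h x * φ x| :=
          Finset.abs_sum_le_sum_abs _ _
      _ ≤ ∑ z, (ε * ((1:ℝ)/m)^n * S₁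
            + (∫ x in Q z, (f x + g x)) * (S₂ * (Real.sqrt n / m))) :=
          Finset.sum_le_sum (fun z _ => key z)
      _ = (Fintype.card (Fin n → Fin m) : ℝ) * (ε * ((1:ℝ)/m)^n * S₁)
            + (∑ z, ∫ x in Q z, (f x + g x)) * (S₂ * (Real.sqrt n / m)) := by
          rw [Finset.sum_add_distrib, Finset.sum_const, nsmul_eq_mul, ← Finset.sum_mul]
          simp [Finset.card_univ]
      _ = ε * S₁ + (∫ x in closedUnitCube n, (f x + g x)) * (S₂ * (Real.sqrt n / m)) := by
          rw [hcard, ← hsplit2]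
          congr 1
          have hone : (m:ℝ)^n * ((1:ℝ)/m)^n = 1 := by
            rw [← mul_pow]
            field_simp
            exact one_pow n
          calc (m:ℝ)^n * (ε * ((1:ℝ)/m)^n * S₁)
              = ((m:ℝ)^n * ((1:ℝ)/m)^n) * (ε * S₁) := by ring
            _ = ε * S₁ := by rw [hone, one_mul]
  have hend : (∫ x in closedUnitCube n, (f x + g x)) * (S₂ * (Real.sqrt n / m))
      ≤ 2 * K * (S₂ * (Real.sqrt n / m)) := by
    apply mul_le_mul_of_nonneg_right ?_ (by positivity)
    exact hbound
  show |∫ x in closedUnitCube n, h x * φ x| ≤ ε * S₁ + 2 * K * (Real.sqrt n / m) * S₂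
  calc |∫ x in closedUnitCube n, h x * φ x|
      ≤ ε * S₁ + (∫ x in closedUnitCube n, (f x + g x)) * (S₂ * (Real.sqrt n / m)) := hfinal
    _ ≤ ε * S₁ + 2 * K * (S₂ * (Real.sqrt n / m)) := add_le_add_right hend _
    _ = ε * S₁ + 2 * K * (Real.sqrt n / m) * S₂ := by ring

end AuxProof2
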